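/- Let T be a bounded linear operator on a complex Hilbert space H. Then ‖T‖² ≤ ω((Re T)T) + ω((Im T)T). -/

import Mathlib

open ContinuousLinearMap

/-- The numerical radius of a bounded linear operator on a complex Hilbert space:
`ω(T) = sup_{‖x‖ = 1} |⟨Tx, x⟩|`. -/
noncomputable def numRadius {H : Type*} [NormedAddCommGroup H] [InnerProductSpace ℂ H]
    (T : H →L[ℂ] H) : ℝ :=
  ⨆ x : {x : H // ‖x‖ = 1}, ‖(inner ℂ (T x) (x : H) : ℂ)‖

/-- The real part of an operator: `Re(T) = (T + T*)/2`. -/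
noncomputable def reOp {H : Type*} [NormedAddCommGroup H] [InnerProductSpace ℂ H]
    [CompleteSpace H] (T : H →L[ℂ] H) : H →L[ℂ] H :=
  (2 : ℂ)⁻¹ • (T + adjoint T)

/-- The imaginary part of an operator: `Im(T) = (T - T*)/(2i)`. -/
noncomputable def imOp {H : Type*} [NormedAddCommGroup H] [InnerProductSpace ℂ H]
    [CompleteSpace H] (T : H →L[ℂ] H) : H →L[ℂ] H :=
  (2 * Complex.I)⁻¹ • (T - adjoint T)

/-- The range defining the numerical radius is bounded above by `‖S‖`. -/
lemma numRadius_bddAbove {H : Type*} [NormedAddCommGroup H] [InnerProductSpace ℂ H]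
    (S : H →L[ℂ] H) :
    BddAbove (Set.range fun x : {x : H // ‖x‖ = 1} => ‖(inner ℂ (S x) (x : H) : ℂ)‖) := by
  refine ⟨‖S‖, ?_⟩
  rintro _ ⟨x, rfl⟩
  calc ‖(inner ℂ (S x) (x : H) : ℂ)‖ ≤ ‖S (x : H)‖ * ‖(x : H)‖ := norm_inner_le_norm _ _
    _ ≤ (‖S‖ * ‖(x : H)‖) * ‖(x : H)‖ :=
        mul_le_mul_of_nonneg_right (S.le_opNorm _) (norm_nonneg _)
    _ = ‖S‖ := by rw [x.2]; ring

lemma inner_le_numRadius {H : Type*} [NormedAddCommGroup H] [InnerProductSpace ℂ H]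
    (S : H →L[ℂ] H) (x : H) (hx : ‖x‖ = 1) :
    ‖(inner ℂ (S x) x : ℂ)‖ ≤ numRadius S :=
  le_ciSup (numRadius_bddAbove S) (⟨x, hx⟩ : {x : H // ‖x‖ = 1})

lemma numRadius_nonneg {H : Type*} [NormedAddCommGroup H] [InnerProductSpace ℂ H]
    (S : H →L[ℂ] H) : 0 ≤ numRadius S :=
  Real.iSup_nonneg fun _ => norm_nonneg _

/-- The key identity: `‖Tu‖² = ⟨(Re T)Tu, u⟩ + i⟨(Im T)Tu, u⟩`. -/
lemma norm_sq_eq_inner_re_add_I_inner_im {H : Type*} [NormedAddCommGroup H]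
    [InnerProductSpace ℂ H] [CompleteSpace H] (T : H →L[ℂ] H) (u : H) :
    ((‖T u‖ : ℂ)) ^ 2 = inner ℂ ((reOp T ∘L T) u) u + Complex.I * inner ℂ ((imOp T ∘L T) u) u := by
  simp only [reOp, imOp, comp_apply, smul_apply, add_apply, sub_apply,
    inner_smul_left, inner_add_left, inner_sub_left, adjoint_inner_left, map_inv₀, map_mul,
    Complex.conj_I, Complex.conj_ofNat, map_ofNat]
  rw [show (inner ℂ (T u) (T u) : ℂ) = (‖T u‖ : ℂ) ^ 2 from
    inner_self_eq_norm_sq_to_K (𝕜 := ℂ) (T u)]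
  set s := (inner ℂ (T (T u)) u : ℂ)
  have hI := Complex.I_ne_zero
  field_simp
  ring

theorem norm_sq_le_numRadius_re_add_numRadius_im
    {H : Type*} [NormedAddCommGroup H] [InnerProductSpace ℂ H] [CompleteSpace H]
    (T : H →L[ℂ] H) :
    ‖T‖ ^ 2 ≤ numRadius (reOp T ∘L T) + numRadius (imOp T ∘L T) := by
  set C := numRadius (reOp T ∘L T) + numRadius (imOp T ∘L T) with hC
  have hC0 : 0 ≤ C := add_nonneg (numRadius_nonneg _) (numRadius_nonneg _)
  have key : ∀ u : H, ‖u‖ = 1 → ‖T u‖ ^ 2 ≤ C := by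
    intro u hu
    have h1 := norm_sq_eq_inner_re_add_I_inner_im T u
    have h2 : ‖T u‖ ^ 2 = ‖((‖T u‖ : ℂ)) ^ 2‖ := by
      rw [norm_pow, Complex.norm_real, Real.norm_eq_abs, abs_of_nonneg (norm_nonneg _)]
    calc ‖T u‖ ^ 2 = ‖((‖T u‖ : ℂ)) ^ 2‖ := h2
      _ = ‖inner ℂ ((reOp T ∘L T) u) u + Complex.I * inner ℂ ((imOp T ∘L T) u) u‖ := by rw [h1]
      _ ≤ ‖(inner ℂ ((reOp T ∘L T) u) u : ℂ)‖ + ‖Complex.I * inner ℂ ((imOp T ∘L T) u) u‖ :=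
          norm_add_le _ _
      _ = ‖(inner ℂ ((reOp T ∘L T) u) u : ℂ)‖ + ‖(inner ℂ ((imOp T ∘L T) u) u : ℂ)‖ := by
          rw [norm_mul, Complex.norm_I, one_mul]
      _ ≤ C := add_le_add (inner_le_numRadius _ u hu) (inner_le_numRadius _ u hu)
  have hT : ‖T‖ ≤ Real.sqrt C := by
    refine T.opNorm_le_bound (Real.sqrt_nonneg C) fun x => ?_
    rcases eq_or_ne x 0 with rfl | hx
    · simp
    · have hxn : ‖x‖ ≠ 0 := norm_ne_zero_iff.mpr hx
      set u := ‖x‖⁻¹ • x with hu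
      have hu1 : ‖u‖ = 1 := by
        rw [hu, norm_smul, norm_inv, norm_norm, inv_mul_cancel₀ hxn]
      have h3 : ‖T u‖ ≤ Real.sqrt C := by
        rw [show ‖T u‖ = Real.sqrt (‖T u‖ ^ 2) by
          rw [Real.sqrt_sq (norm_nonneg _)]]
        exact Real.sqrt_le_sqrt (key u hu1)
      have h4 : ‖T u‖ = ‖x‖⁻¹ * ‖T x‖ := by
        rw [hu, T.map_smul_of_tower, norm_smul, norm_inv, norm_norm]
      rw [h4] at h3
      calc ‖T x‖ = ‖x‖ * (‖x‖⁻¹ * ‖T x‖) := by field_simp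
        _ ≤ ‖x‖ * Real.sqrt C := mul_le_mul_of_nonneg_left h3 (norm_nonneg _)
        _ = Real.sqrt C * ‖x‖ := mul_comm _ _
  calc ‖T‖ ^ 2 ≤ Real.sqrt C ^ 2 := pow_le_pow_left₀ (norm_nonneg _) hT 2
    _ = C := Real.sq_sqrt hC0
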